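/- arXiv:1212.1230 — 2 statements merged into one kernel-verified Lean document; each statement's English description precedes it below -/
import Mathlib

section
/- Let a countable group G act by measurable, measure-preserving transformations on a probability space (X,μ) such that for every g ∈ G the set Fix(g) = {x ∈ X : g·x = x} is measurable. Then the function χ: G → ℂ defined by χ(g) = μ(Fix(g)) is a character of G; that is, χ(e) = 1, χ(gh) = χ(hg) for all g,h ∈ G, and for every m and all g₁,…,g_m ∈ G the matrix (χ(g_i g_j⁻¹))_{i,j} is positive semidefinite. -/
open scoped ComplexOrder

/-- A character of a group `G`: a normalized positive-definite class function. -/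
def IsCharacter {G : Type*} [Group G] (χ : G → ℂ) : Prop :=
  χ 1 = 1 ∧
  (∀ g h : G, χ (g * h) = χ (h * g)) ∧
  ∀ (m : ℕ) (g : Fin m → G),
    Matrix.PosSemidef (Matrix.of fun a b : Fin m => χ (g a * (g b)⁻¹))

/-- An indecomposable character: one which is not a proper convex combination of
two distinct characters. -/
def IsIndecomposableCharacter {G : Type*} [Group G] (χ : G → ℂ) : Prop :=
  IsCharacter χ ∧
  ¬∃ (α : ℝ) (χ₁ χ₂ : G → ℂ), 0 < α ∧ α < 1 ∧
      IsCharacter χ₁ ∧ IsCharacter χ₂ ∧ χ₁ ≠ χ₂ ∧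
      χ = fun g => (α : ℂ) * χ₁ g + (1 - (α : ℂ)) * χ₂ g

/-- The regular character: `χ(e) = 1` and `χ(g) = 0` for `g ≠ e`. -/
def IsRegularCharacter {G : Type*} [Group G] (χ : G → ℂ) : Prop :=
  χ 1 = 1 ∧ ∀ g : G, g ≠ 1 → χ g = 0

/-- The identity character: `χ(g) = 1` for all `g`. -/
def IsIdentityCharacter {G : Type*} [Group G] (χ : G → ℂ) : Prop :=
  ∀ g : G, χ g = 1

open MeasureTheory

lemma aux_sum_nonneg {X : Type*} [DecidableEq X] {m : ℕ} (y : Fin m → X) (c : Fin m → ℂ) :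
    0 ≤ ∑ a, ∑ b, (if y a = y b then star (c a) * c b else 0) := by
  classical
  have key : ∑ a, ∑ b, (if y a = y b then star (c a) * c b else 0)
      = ∑ t ∈ Finset.image y Finset.univ,
          star (∑ a, if y a = t then c a else 0) * (∑ b, if y b = t then c b else 0) := by
    have : ∀ t, star (∑ a, if y a = t then c a else 0) * (∑ b, if y b = t then c b else 0)
        = ∑ a, ∑ b, (if y a = t then star (c a) else 0) * (if y b = t then c b else 0) := by
      intro t
      rw [star_sum, Finset.sum_mul_sum]
      simp [apply_ite star]
    simp_rw [this]
    rw [Finset.sum_comm (s := Finset.image y Finset.univ) (t := Finset.univ)]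
    refine Finset.sum_congr rfl fun a _ => ?_
    rw [Finset.sum_comm (s := Finset.image y Finset.univ) (t := Finset.univ)]
    refine Finset.sum_congr rfl fun b _ => ?_
    simp only [ite_mul, zero_mul, mul_ite, mul_zero]
    by_cases h : y a = y b
    · rw [if_pos h]
      symm
      rw [Finset.sum_eq_single (y a)]
      · simp [← h]
      · intro t _ ht
        exact if_neg fun hb => ht (hb.symm.trans h.symm)
      · intro hmem
        exact absurd (Finset.mem_image_of_mem y (Finset.mem_univ a)) hmem
    · rw [if_neg h]
      symm
      apply Finset.sum_eq_zero
      intro t _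
      by_cases hb : y b = t
      · rw [if_pos hb, if_neg]
        intro ha; exact h (ha.trans hb.symm)
      · rw [if_neg hb]
  rw [key]
  apply Finset.sum_nonneg
  intro t _
  exact star_mul_self_nonneg _


/-- Statement 15: if a countable group `G` acts by measurable measure-preserving
transformations on a probability space `(X,μ)` with all fixed-point sets
measurable, then `g ↦ μ(Fix(g))` is a character of `G`. -/
theorem statement15 {G X : Type*} [Group G] [Countable G] [MeasurableSpace X]
    (μ : Measure X) [IsProbabilityMeasure μ] [MulAction G X]
    (hmeas : ∀ g : G, Measurable fun x : X => g • x)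
    (hpres : ∀ (g : G) (A : Set X), MeasurableSet A →
      μ ((fun x : X => g • x) ⁻¹' A) = μ A)
    (hfix : ∀ g : G, MeasurableSet {x : X | g • x = x}) :
    IsCharacter fun g : G => ((μ {x : X | g • x = x}).toReal : ℂ) := by
  classical
  have fix_inv : ∀ k : G, {x : X | k • x = x} = {x : X | k⁻¹ • x = x} := by
    intro k; ext x
    simp only [Set.mem_setOf_eq]
    constructor
    · intro h; nth_rewrite 1 [← h]; exact inv_smul_smul k x
    · intro h; nth_rewrite 1 [← h]; exact smul_inv_smul k x
  refine ⟨?_, ?_, ?_⟩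
  · have h1 : {x : X | (1:G) • x = x} = Set.univ := by ext x; simp
    simp [h1]
  · intro g h
    have hset : (fun x : X => g • x) ⁻¹' {x | (g*h) • x = x} = {x | (h*g) • x = x} := by
      ext x
      simp only [Set.mem_preimage, Set.mem_setOf_eq, mul_smul]
      constructor
      · intro hx; exact smul_left_cancel g hx
      · intro hx; rw [hx]
    have hμ := hpres g _ (hfix (g*h))
    rw [hset] at hμ
    simp only []
    rw [← hμ]
  · intro m g
    set A : Fin m → Fin m → Set X := fun a b => {x | (g a * (g b)⁻¹) • x = x} with hA_def
    have hmem : ∀ (a b : Fin m) (x : X), x ∈ A a b ↔ (g b)⁻¹ • x = (g a)⁻¹ • x := by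
      intro a b x
      simp only [hA_def, Set.mem_setOf_eq, mul_smul]
      constructor
      · intro hx; nth_rewrite 2 [← hx]; rw [inv_smul_smul]
      · intro hx; rw [hx, smul_inv_smul]
    rw [Matrix.posSemidef_iff_dotProduct_mulVec]
    constructor
    · ext a b
      simp only [Matrix.conjTranspose_apply, Matrix.of_apply]
      have e1 : A b a = A a b := by
        rw [hA_def]
        simp only []
        rw [fix_inv (g b * (g a)⁻¹), mul_inv_rev, inv_inv]
      rw [show star ((((μ (A b a)).toReal : ℝ) : ℂ)) = (((μ (A b a)).toReal : ℝ) : ℂ) from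
        Complex.conj_ofReal _, e1]
    · intro v
      have hint : ∀ a b : Fin m,
          Integrable ((A a b).indicator fun _ => (star (v a) * v b : ℂ)) μ :=
        fun a b => (integrable_const _).indicator (hfix _)
      have key : dotProduct (star v)
            ((Matrix.of fun a b : Fin m => (((μ (A a b)).toReal : ℝ) : ℂ)).mulVec v)
          = ∫ x, ∑ a, ∑ b, (A a b).indicator (fun _ => (star (v a) * v b : ℂ)) x ∂μ := by
        rw [MeasureTheory.integral_finset_sum _
          fun a _ => integrable_finset_sum _ fun b _ => hint a b]
        simp only [dotProduct, Matrix.mulVec, Matrix.of_apply, Pi.star_apply,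
          Finset.mul_sum]
        refine Finset.sum_congr rfl fun a _ => ?_
        rw [MeasureTheory.integral_finset_sum _ fun b _ => hint a b]
        refine Finset.sum_congr rfl fun b _ => ?_
        rw [MeasureTheory.integral_indicator_const _ (hfix _), Complex.real_smul]
        simp only [measureReal_def, hA_def]
        ring
      set f : X → ℂ :=
        fun x => ∑ a, ∑ b, (A a b).indicator (fun _ => (star (v a) * v b : ℂ)) x with hf
      have hfnn : ∀ x, 0 ≤ f x := by
        intro x
        have e : f x = ∑ a, ∑ b,
            (if ((g a)⁻¹ • x : X) = (g b)⁻¹ • x then star (v a) * v b else 0) := by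
          refine Finset.sum_congr rfl fun a _ => Finset.sum_congr rfl fun b _ => ?_
          simp only [hf, Set.indicator_apply]
          exact if_congr ((hmem a b x).trans eq_comm) rfl rfl
        rw [e]
        exact aux_sum_nonneg (fun a => (g a)⁻¹ • x) v
      have hint' : Integrable f μ :=
        integrable_finset_sum _ fun a _ => integrable_finset_sum _ fun b _ => hint a b
      show 0 ≤ dotProduct (star v)
        ((Matrix.of fun a b : Fin m => (((μ (A a b)).toReal : ℝ) : ℂ)).mulVec v)
      rw [key, Complex.le_def]
      constructor
      · have hre := integral_re hint'
        simp only [RCLike.re_to_complex] at hre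
        rw [Complex.zero_re, ← hre]
        exact integral_nonneg fun x => by simpa using (Complex.le_def.mp (hfnn x)).1
      · have him := integral_im hint'
        simp only [RCLike.im_to_complex] at him
        rw [Complex.zero_im, ← him]
        have hz : ∀ x, (f x).im = 0 := fun x => by
          simpa using (Complex.le_def.mp (hfnn x)).2.symm
        simp [hz]
end

section
/- Let G be a countable group acting by homeomorphisms on an infinite Polish regular Hausdorff topological space X, and suppose the action is compressible. Then there is no G-invariant Borel probability measure on X. -/
/-- The support of a group element acting on a topological space:
the closure of the set of non-fixed points. -/
def gsupp {G X : Type*} [Group G] [TopologicalSpace X] [MulAction G X] (g : G) : Set X :=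
  closure {x : X | g • x ≠ x}

/-- A base `𝔘` of the topology of `X` witnessing that the action of `G` on `X`
is compressible: (i) every support is contained in some element of `𝔘`;
(ii) any `U₁ ∈ 𝔘` can be moved by the group inside any `U₂ ∈ 𝔘`;
(iii) if `U₁, U₂ ∈ 𝔘` have disjoint closures then `U₁` can be moved off any
`U₃ ∈ 𝔘` by an element whose support misses `U₂`;
(iv) `𝔘` is directed upwards under unions. -/
def IsCompressibleBase (G : Type*) {X : Type*} [Group G] [TopologicalSpace X]
    [MulAction G X] (𝔘 : Set (Set X)) : Prop :=
  TopologicalSpace.IsTopologicalBasis 𝔘 ∧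
  (∀ g : G, ∃ U ∈ 𝔘, gsupp g ⊆ U) ∧
  (∀ U₁ ∈ 𝔘, ∀ U₂ ∈ 𝔘, ∃ g : G, (fun x : X => g • x) '' U₁ ⊆ U₂) ∧
  (∀ U₁ ∈ 𝔘, ∀ U₂ ∈ 𝔘, ∀ U₃ ∈ 𝔘, closure U₁ ∩ closure U₂ = ∅ →
    ∃ g : G, ((fun x : X => g • x) '' U₁) ∩ U₃ = ∅ ∧ gsupp g ∩ U₂ = ∅) ∧
  (∀ U₁ ∈ 𝔘, ∀ U₂ ∈ 𝔘, ∃ U₃ ∈ 𝔘, U₁ ∪ U₂ ⊆ U₃)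

/-- The action of `G` on `X` is compressible if some base of the topology
witnesses it. -/
def IsCompressibleAction (G X : Type*) [Group G] [TopologicalSpace X] [MulAction G X] : Prop :=
  ∃ 𝔘 : Set (Set X), IsCompressibleBase G 𝔘

open MeasureTheory ENNReal

/-- Statement 19: a compressible action of a countable group by homeomorphisms
on an infinite Polish regular Hausdorff space admits no invariant Borel
probability measure. -/
theorem statement19 {G X : Type*} [Group G] [Countable G]
    [TopologicalSpace X] [PolishSpace X] [T2Space X] [RegularSpace X] [Infinite X]
    [MeasurableSpace X] [BorelSpace X]
    [MulAction G X] (hcont : ∀ g : G, Continuous fun x : X => g • x)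
    (hcomp : IsCompressibleAction G X) :
    ¬∃ μ : Measure X, IsProbabilityMeasure μ ∧
      ∀ (g : G) (A : Set X), MeasurableSet A →
        μ ((fun x : X => g • x) ⁻¹' A) = μ A := by
  rintro ⟨μ, hprob, hinv⟩
  obtain ⟨𝔘, hbasis, -, hmove, -, hdir⟩ := hcomp

  -- image of an open set has the same measure
  have himg : ∀ (g : G) (U : Set X), IsOpen U → μ ((fun x : X => g • x) '' U) = μ U := by
    intro g U hU
    have h1 : (fun x : X => g • x) '' U = (fun x : X => g⁻¹ • x) ⁻¹' U := by
      ext x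
      constructor
      · rintro ⟨y, hy, rfl⟩; simpa [inv_smul_smul] using hy
      · intro hx; exact ⟨g⁻¹ • x, hx, by simp [smul_inv_smul]⟩
    have hAopen : IsOpen ((fun x : X => g • x) '' U) := h1 ▸ hU.preimage (hcont g⁻¹)
    have h2 : (fun x : X => g • x) ⁻¹' ((fun x : X => g • x) '' U) = U := by
      rw [h1]; ext x; simp [inv_smul_smul]
    have := hinv g _ hAopen.measurableSet
    rw [h2] at this; exact this.symm
  have hle : ∀ U₁ ∈ 𝔘, ∀ U₂ ∈ 𝔘, μ U₁ ≤ μ U₂ := by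
    intro U₁ h₁ U₂ h₂
    obtain ⟨g, hg⟩ := hmove U₁ h₁ U₂ h₂
    calc μ U₁ = μ ((fun x : X => g • x) '' U₁) := (himg g U₁ (hbasis.isOpen h₁)).symm
    _ ≤ μ U₂ := measure_mono hg
  -- pick a reference basis element
  obtain ⟨x₀⟩ := (inferInstance : Nonempty X)
  obtain ⟨U₀, hU₀, -, -⟩ := hbasis.exists_subset_of_mem_open (Set.mem_univ x₀) isOpen_univ
  -- countable subcover
  obtain ⟨T, hTc, hTsub, hT⟩ :=
    TopologicalSpace.isOpen_sUnion_countable 𝔘 (fun s hs => hbasis.isOpen hs)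
  rw [hbasis.sUnion_eq] at hT
  have hTne : T.Nonempty := by
    rcases Set.eq_empty_or_nonempty T with h | h
    · rw [h] at hT; simp at hT
      exact (Set.empty_ne_univ hT).elim
    · exact h
  obtain ⟨f, hf⟩ := hTc.exists_eq_range hTne
  have hfmem : ∀ n, f n ∈ 𝔘 := fun n => hTsub (hf ▸ Set.mem_range_self n)
  -- accumulated unions are contained in basis elements
  have hacc : ∀ n, ∃ V ∈ 𝔘, Set.accumulate f n ⊆ V := by
    intro n
    induction n with
    | zero => exact ⟨f 0, hfmem 0, by simp [Set.accumulate_def]⟩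
    | succ n ih =>
      obtain ⟨V, hV, hVsub⟩ := ih
      obtain ⟨W, hW, hWsub⟩ := hdir V hV (f (n+1)) (hfmem (n+1))
      refine ⟨W, hW, ?_⟩
      rw [Set.accumulate_def]
      apply Set.iUnion₂_subset
      intro k hk
      rcases Nat.lt_or_ge k (n+1) with hk' | hk'
      · exact (Set.subset_accumulate.trans (Set.accumulate_subset_accumulate
          (Nat.lt_succ_iff.mp hk'))).trans (hVsub.trans
          ((Set.subset_union_left).trans hWsub))
      · have : k = n + 1 := le_antisymm hk hk'
        subst this
        exact (Set.subset_union_right).trans hWsub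
  have hunivle : (1 : ℝ≥0∞) ≤ μ U₀ := by
    have hcover : (⋃ n, Set.accumulate f n) = Set.univ := by
      rw [Set.iUnion_accumulate, ← Set.sUnion_range, ← hf]
      exact hT
    have := Set.monotone_accumulate.directed_le.measure_iUnion (μ := μ) (s := fun n => Set.accumulate f n)
    rw [hcover, measure_univ] at this
    rw [this]
    apply iSup_le
    intro n
    obtain ⟨V, hV, hVsub⟩ := hacc n
    exact (measure_mono hVsub).trans (hle V hV U₀ hU₀)
  -- two disjoint basis elements
  obtain ⟨x, y, hxy⟩ := exists_pair_ne X
  obtain ⟨u, v, hu, hv, hxu, hyv, huv⟩ := t2_separation hxy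
  obtain ⟨U, hU, hxU, hUu⟩ := hbasis.exists_subset_of_mem_open hxu hu
  obtain ⟨V, hV, hyV, hVv⟩ := hbasis.exists_subset_of_mem_open hyv hv
  have hdisj : Disjoint U V := huv.mono hUu hVv
  have h1 : (1:ℝ≥0∞) ≤ μ U := hunivle.trans (hle U₀ hU₀ U hU)
  have h2 : (1:ℝ≥0∞) ≤ μ V := hunivle.trans (hle U₀ hU₀ V hV)
  have hU2 := measure_union (μ := μ) hdisj (hbasis.isOpen hV).measurableSet
  have hle1 : μ (U ∪ V) ≤ 1 := by
    simpa using measure_mono (μ := μ) (Set.subset_univ (U ∪ V))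
  rw [hU2] at hle1
  have : (2:ℝ≥0∞) ≤ 1 := le_trans (by
    calc (2:ℝ≥0∞) = 1 + 1 := by norm_num
    _ ≤ μ U + μ V := add_le_add h1 h2) hle1
  norm_num at this
end
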